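/- In the Birkhoff decomposition of a character φ of a graded connected commutative bialgebra H with values in a commutative Rota–Baxter algebra (A, P) (P idempotent Rota–Baxter operator of weight −1 with image and kernel subalgebras), the map φ_- defined recursively by φ_-(1)=1 and φ_-(x) = −P(φ(x) + ∑_{(x)} φ_-(x')φ(x'')) for x of positive degree is itself an algebra morphism (character) from H to A. -/

import Mathlib

/- STATEMENT 6: In the Birkhoff decomposition of a character `φ` of a graded connected
commutative bialgebra `H` with values in a commutative Rota–Baxter algebra `(A, P)`
(with `P` an idempotent Rota–Baxter operator of weight −1 whose image and kernel are
subalgebras), the recursively defined map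
`φ₋(1) = 1`, `φ₋(x) = −P(φ(x) + ∑ φ₋(x')φ(x'')) = −P((φ₋*φ)(x) − φ₋(x))` for `x` of
positive degree, is itself a character. -/

variable {R H A : Type*} [Field R] [CommRing H] [Bialgebra R H]
  [CommRing A] [Algebra R A]

noncomputable def conv (f g : H →ₗ[R] A) : H →ₗ[R] A :=
  (LinearMap.mul' R A).comp ((TensorProduct.map f g).comp
    (Coalgebra.comul : H →ₗ[R] TensorProduct R H H))

def IsCharacter (f : H →ₗ[R] A) : Prop :=
  f 1 = 1 ∧ ∀ x y : H, f (x * y) = f x * f y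

def Connected (ℬ : ℕ → Submodule R H) : Prop :=
  ℬ 0 ≤ Submodule.span R {(1 : H)}

def ComulGraded (ℬ : ℕ → Submodule R H) : Prop :=
  ∀ n : ℕ, ∀ x ∈ ℬ n, (Coalgebra.comul (R := R) x : TensorProduct R H H) ∈
    ⨆ (p : ℕ × ℕ) (_ : p.1 + p.2 = n),
      LinearMap.range (TensorProduct.map (ℬ p.1).subtype (ℬ p.2).subtype)

open TensorProduct

lemma exists_rep (ℬ : ℕ → Submodule R H) (n : ℕ) (z : H ⊗[R] H)
    (hz : z ∈ ⨆ (p : ℕ × ℕ) (_ : p.1 + p.2 = n),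
        LinearMap.range (TensorProduct.map (ℬ p.1).subtype (ℬ p.2).subtype)) :
    ∃ l : List (H × H),
      (∀ t ∈ l, ∃ p q : ℕ, p + q = n ∧ t.1 ∈ ℬ p ∧ t.2 ∈ ℬ q) ∧
      z = (l.map fun t => t.1 ⊗ₜ[R] t.2).sum := by
  refine Submodule.iSup_induction
    (motive := fun w => ∃ l : List (H × H),
      (∀ t ∈ l, ∃ p q : ℕ, p + q = n ∧ t.1 ∈ ℬ p ∧ t.2 ∈ ℬ q) ∧
      w = (l.map fun t => t.1 ⊗ₜ[R] t.2).sum)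
    _ hz (fun i w hw => ?_) ⟨[], by simp, by simp⟩ ?_
  · by_cases hi : i.1 + i.2 = n
    · rw [iSup_pos hi] at hw
      obtain ⟨t, rfl⟩ := hw
      induction t using TensorProduct.induction_on with
      | zero => exact ⟨[], by simp, by simp⟩
      | tmul a b =>
          refine ⟨[((a : H), (b : H))], ?_, by simp⟩
          rintro t ht
          simp only [List.mem_singleton] at ht
          subst ht
          exact ⟨i.1, i.2, hi, a.2, b.2⟩
      | add u v hu hv =>
          obtain ⟨lu, hlu, hsu⟩ := hu
          obtain ⟨lv, hlv, hsv⟩ := hv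
          refine ⟨lu ++ lv, ?_, ?_⟩
          · intro t ht
            rcases List.mem_append.1 ht with h | h
            exacts [hlu t h, hlv t h]
          · simp [map_add, hsu, hsv]
    · rw [iSup_neg hi] at hw
      rw [Submodule.mem_bot] at hw
      exact ⟨[], by simp, by simp [hw]⟩
  · rintro w w' ⟨lz, hlz, hsz⟩ ⟨lw, hlw, hsw⟩
    refine ⟨lz ++ lw, ?_, ?_⟩
    · intro t ht
      rcases List.mem_append.1 ht with h | h
      exacts [hlz t h, hlw t h]
    · simp [hsz, hsw]

lemma split_rep (ℬ : ℕ → Submodule R H) (hconn : ℬ 0 ≤ Submodule.span R {(1 : H)})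
    (n : ℕ) (l : List (H × H))
    (hl : ∀ t ∈ l, ∃ p q : ℕ, p + q = n ∧ t.1 ∈ ℬ p ∧ t.2 ∈ ℬ q) :
    ∃ (a c : H) (l' : List (H × H)), a ∈ ℬ n ∧ c ∈ ℬ n ∧
      (∀ t ∈ l', ∃ p q : ℕ, p + q = n ∧ 0 < p ∧ 0 < q ∧ t.1 ∈ ℬ p ∧ t.2 ∈ ℬ q) ∧
      (l.map fun t => t.1 ⊗ₜ[R] t.2).sum =
        a ⊗ₜ[R] 1 + 1 ⊗ₜ[R] c + (l'.map fun t => t.1 ⊗ₜ[R] t.2).sum := by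
  induction l with
  | nil => exact ⟨0, 0, [], (ℬ n).zero_mem, (ℬ n).zero_mem, by simp, by simp⟩
  | cons t l ih =>
      obtain ⟨a, c, l', ha, hc, hl', hs⟩ := ih (fun s hs => hl s (List.mem_cons_of_mem _ hs))
      obtain ⟨p, q, hpq, h1, h2⟩ := hl t List.mem_cons_self
      rcases Nat.eq_zero_or_pos p with hp | hp
      · subst hp
        obtain ⟨r, hr⟩ := Submodule.mem_span_singleton.1 (hconn h1)
        refine ⟨a, r • t.2 + c, l', ha, (ℬ n).add_mem ((ℬ n).smul_mem r (by rw [← hpq, Nat.zero_add]; exact h2))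
          hc, hl', ?_⟩
        rw [List.map_cons, List.sum_cons, hs, ← hr, TensorProduct.smul_tmul,
          TensorProduct.tmul_add]
        abel
      · rcases Nat.eq_zero_or_pos q with hq | hq
        · subst hq
          obtain ⟨r, hr⟩ := Submodule.mem_span_singleton.1 (hconn h2)
          refine ⟨r • t.1 + a, c, l', (ℬ n).add_mem ((ℬ n).smul_mem r (by
            rwa [← hpq, Nat.add_zero])) ha, hc, hl', ?_⟩
          rw [List.map_cons, List.sum_cons, hs, ← hr, TensorProduct.tmul_smul,
            TensorProduct.smul_tmul', TensorProduct.add_tmul]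
          abel
        · refine ⟨a, c, t :: l', ha, hc, ?_, ?_⟩
          · rintro s hs
            rcases List.mem_cons.1 hs with rfl | hsl
            exacts [⟨p, q, hpq, hp, hq, h1, h2⟩, hl' s hsl]
          · rw [List.map_cons, List.sum_cons, hs, List.map_cons, List.sum_cons]
            abel

lemma comul_structure (ℬ : ℕ → Submodule R H) [GradedAlgebra ℬ]
    (hconn : ℬ 0 ≤ Submodule.span R {(1 : H)})
    (hgr : ∀ n : ℕ, ∀ x ∈ ℬ n, (Coalgebra.comul (R := R) x : H ⊗[R] H) ∈
      ⨆ (p : ℕ × ℕ) (_ : p.1 + p.2 = n),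
        LinearMap.range (TensorProduct.map (ℬ p.1).subtype (ℬ p.2).subtype))
    (n : ℕ) (hn : 0 < n) (x : H) (hx : x ∈ ℬ n) :
    ∃ l : List (H × H),
      (∀ t ∈ l, ∃ p q : ℕ, p + q = n ∧ 0 < p ∧ 0 < q ∧ t.1 ∈ ℬ p ∧ t.2 ∈ ℬ q) ∧
      (Coalgebra.comul (R := R) x : H ⊗[R] H) =
        x ⊗ₜ[R] 1 + 1 ⊗ₜ[R] x + (l.map fun t => t.1 ⊗ₜ[R] t.2).sum := by
  obtain ⟨l, hl, hsum⟩ := exists_rep ℬ n _ (hgr n x hx)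
  obtain ⟨a, c, l', ha, hc, hl', hs⟩ := split_rep ℬ hconn n l hl
  rw [hs] at hsum
  set Gr : H ⊗[R] H →ₗ[R] H :=
    (GradedAlgebra.proj ℬ n) ∘ₗ (TensorProduct.rid R H).toLinearMap ∘ₗ
      (Coalgebra.counit (R := R)).lTensor H with hGr
  set Gl : H ⊗[R] H →ₗ[R] H :=
    (GradedAlgebra.proj ℬ n) ∘ₗ (TensorProduct.lid R H).toLinearMap ∘ₗ
      (Coalgebra.counit (R := R)).rTensor H with hGl
  have hGrt : ∀ u v : H, Gr (u ⊗ₜ[R] v) =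
      Coalgebra.counit (R := R) v • GradedAlgebra.proj ℬ n u := by
    intro u v
    simp [hGr, LinearMap.lTensor_tmul, map_smul]
  have hGlt : ∀ u v : H, Gl (u ⊗ₜ[R] v) =
      Coalgebra.counit (R := R) u • GradedAlgebra.proj ℬ n v := by
    intro u v
    simp [hGl, LinearMap.rTensor_tmul, map_smul]
  have hproj_same : ∀ u : H, u ∈ ℬ n → GradedAlgebra.proj ℬ n u = u := by
    intro u hu
    rw [GradedAlgebra.proj_apply, DirectSum.decompose_of_mem_same ℬ hu]
  have hproj_ne : ∀ (k : ℕ) (u : H), k ≠ n → u ∈ ℬ k → GradedAlgebra.proj ℬ n u = 0 := by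
    intro k u hk hu
    rw [GradedAlgebra.proj_apply, DirectSum.decompose_of_mem_ne ℬ hu hk]
  have hone : (1 : H) ∈ ℬ 0 := SetLike.one_mem_graded ℬ
  have hzr : ((l'.map fun t => Gr (t.1 ⊗ₜ[R] t.2)).sum : H) = 0 := by
    rw [List.sum_eq_zero]
    intro w hw
    obtain ⟨t, ht, rfl⟩ := List.mem_map.1 hw
    obtain ⟨p, q, hpq, hp, hq, h1, h2⟩ := hl' t ht
    rw [hGrt, hproj_ne p t.1 (by omega) h1, smul_zero]
  have hzl : ((l'.map fun t => Gl (t.1 ⊗ₜ[R] t.2)).sum : H) = 0 := by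
    rw [List.sum_eq_zero]
    intro w hw
    obtain ⟨t, ht, rfl⟩ := List.mem_map.1 hw
    obtain ⟨p, q, hpq, hp, hq, h1, h2⟩ := hl' t ht
    rw [hGlt, hproj_ne q t.2 (by omega) h2, smul_zero]
  have hax : a = x := by
    have hra := congrArg Gr hsum
    rw [map_add, map_add, hGrt, hGrt, map_list_sum, List.map_map] at hra
    rw [show ((l'.map (Gr ∘ fun t => t.1 ⊗ₜ[R] t.2)).sum : H) =
      (l'.map fun t => Gr (t.1 ⊗ₜ[R] t.2)).sum from rfl, hzr, add_zero] at hra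
    rw [Bialgebra.counit_one, one_smul, hproj_same a ha,
      hproj_ne 0 (1:H) (by omega) hone, smul_zero, add_zero] at hra
    have hGrcom : Gr (Coalgebra.comul (R := R) x) = x := by
      rw [hGr]
      simp only [LinearMap.comp_apply, Coalgebra.lTensor_counit_comul,
        LinearEquiv.coe_coe, TensorProduct.rid_tmul, one_smul]
      exact hproj_same x hx
    rw [hGrcom] at hra
    exact hra.symm
  have hcx : c = x := by
    have hra := congrArg Gl hsum
    rw [map_add, map_add, hGlt, hGlt, map_list_sum, List.map_map] at hra
    rw [show ((l'.map (Gl ∘ fun t => t.1 ⊗ₜ[R] t.2)).sum : H) =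
      (l'.map fun t => Gl (t.1 ⊗ₜ[R] t.2)).sum from rfl, hzl, add_zero] at hra
    rw [Bialgebra.counit_one, one_smul, hproj_same c hc,
      hproj_ne 0 (1:H) (by omega) hone, smul_zero, zero_add] at hra
    have hGlcom : Gl (Coalgebra.comul (R := R) x) = x := by
      rw [hGl]
      simp only [LinearMap.comp_apply, Coalgebra.rTensor_counit_comul,
        LinearEquiv.coe_coe, TensorProduct.lid_tmul, one_smul]
      exact hproj_same x hx
    rw [hGlcom] at hra
    exact hra.symm
  exact ⟨l', hl', by rw [hsum, hax, hcx]⟩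

lemma key_hom (ℬ : ℕ → Submodule R H) [GradedAlgebra ℬ]
    (hconn : ℬ 0 ≤ Submodule.span R {(1 : H)})
    (hgr : ∀ n : ℕ, ∀ x ∈ ℬ n, (Coalgebra.comul (R := R) x : H ⊗[R] H) ∈
      ⨆ (p : ℕ × ℕ) (_ : p.1 + p.2 = n),
        LinearMap.range (TensorProduct.map (ℬ p.1).subtype (ℬ p.2).subtype))
    (P : A →ₗ[R] A)
    (hRB : ∀ a b : A, P a * P b = P (P a * b + a * P b - a * b))
    (φ φm : H →ₗ[R] A) (hφ1 : φ 1 = 1) (hφmul : ∀ x y : H, φ (x * y) = φ x * φ y)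
    (hφm1 : φm 1 = 1)
    (hrec : ∀ n : ℕ, 0 < n → ∀ x ∈ ℬ n,
      φm x = - P ((conv φm φ) x - φm x)) :
    ∀ N m n : ℕ, m + n ≤ N → ∀ x ∈ ℬ m, ∀ y ∈ ℬ n, φm (x * y) = φm x * φm y := by
  have base : ∀ x : H, x ∈ ℬ 0 → ∀ y : H, φm (x * y) = φm x * φm y := by
    intro x hx y
    obtain ⟨r, rfl⟩ := Submodule.mem_span_singleton.1 (hconn hx)
    rw [smul_mul_assoc, one_mul, map_smul, map_smul, hφm1, smul_mul_assoc, one_mul]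
  intro N
  induction N with
  | zero =>
      intro m n hmn x hx y hy
      have hm : m = 0 := by omega
      subst hm
      exact base x hx y
  | succ N ih =>
      intro m n hmn x hx y hy
      rcases Nat.eq_zero_or_pos m with hm | hm
      · subst hm; exact base x hx y
      rcases Nat.eq_zero_or_pos n with hn0 | hn0
      · subst hn0; rw [mul_comm, base y hy x, mul_comm]
      -- main case : m, n ≥ 1
      obtain ⟨F, hFd⟩ : ∃ F : H ⊗[R] H →ₗ[R] A,
          F = (LinearMap.mul' R A).comp (TensorProduct.map φm φ) := ⟨_, rfl⟩
      have hF : ∀ u v : H, F (u ⊗ₜ[R] v) = φm u * φ v := by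
        intro u v; rw [hFd]; simp
      have hconv : ∀ z : H, conv φm φ z = F (Coalgebra.comul (R := R) z) := by
        intro z; rw [hFd]; rfl
      have hFsum : ∀ l : List (H × H),
          F ((l.map fun t => t.1 ⊗ₜ[R] t.2).sum) = (l.map fun t => φm t.1 * φ t.2).sum := by
        intro l
        induction l with
        | nil => simp
        | cons t l ihl => simp [hF, ihl]
      have hmulsum : ∀ (c d : H) (l : List (H × H)),
          F ((c ⊗ₜ[R] d) * (l.map fun t => t.1 ⊗ₜ[R] t.2).sum) =
            (l.map fun t => φm (c * t.1) * φ (d * t.2)).sum := by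
        intro c d l
        induction l with
        | nil => simp
        | cons t l ihl =>
            simp [mul_add, Algebra.TensorProduct.tmul_mul_tmul, hF, ihl]
      have hsummul : ∀ (l : List (H × H)) (z : H ⊗[R] H),
          ((l.map fun t => t.1 ⊗ₜ[R] t.2).sum) * z =
            (l.map fun t => (t.1 ⊗ₜ[R] t.2) * z).sum := by
        intro l z
        induction l with
        | nil => simp
        | cons t l ihl => simp [add_mul, ihl]
      have hconstmul : ∀ (a : A) (l : List (H × H)) (f : H × H → A),
          (l.map fun t => a * f t).sum = a * (l.map f).sum := by
        intro a l f
        induction l with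
        | nil => simp
        | cons t l ihl => simp [mul_add, ihl]
      have hconstmulr : ∀ (a : A) (l : List (H × H)) (f : H × H → A),
          (l.map fun t => f t * a).sum = (l.map f).sum * a := by
        intro a l f
        induction l with
        | nil => simp
        | cons t l ihl => simp [add_mul, ihl]
      obtain ⟨lx, hlx, hΔx⟩ := comul_structure ℬ hconn hgr m hm x hx
      obtain ⟨ly, hly, hΔy⟩ := comul_structure ℬ hconn hgr n hn0 y hy
      obtain ⟨Wx, hWxd⟩ : ∃ w : H ⊗[R] H, w = (lx.map fun t => t.1 ⊗ₜ[R] t.2).sum := ⟨_, rfl⟩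
      obtain ⟨Wy, hWyd⟩ : ∃ w : H ⊗[R] H, w = (ly.map fun t => t.1 ⊗ₜ[R] t.2).sum := ⟨_, rfl⟩
      rw [← hWxd] at hΔx
      rw [← hWyd] at hΔy
      obtain ⟨Sx, hSxd⟩ : ∃ s : A, s = (lx.map fun t => φm t.1 * φ t.2).sum := ⟨_, rfl⟩
      obtain ⟨Sy, hSyd⟩ : ∃ s : A, s = (ly.map fun t => φm t.1 * φ t.2).sum := ⟨_, rfl⟩
      have hFWx : F Wx = Sx := by rw [hWxd, hSxd]; exact hFsum lx
      have hFWy : F Wy = Sy := by rw [hWyd, hSyd]; exact hFsum ly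
      have hpx : P (φ x + Sx) = - φm x := by
        have h1 : conv φm φ x - φm x = φ x + Sx := by
          rw [hconv, hΔx, map_add, map_add, hF, hF, hFWx, hφm1, hφ1]
          ring
        have h2 := hrec m hm x hx
        rw [h1] at h2
        rw [h2, neg_neg]
      have hpy : P (φ y + Sy) = - φm y := by
        have h1 : conv φm φ y - φm y = φ y + Sy := by
          rw [hconv, hΔy, map_add, map_add, hF, hF, hFWy, hφm1, hφ1]
          ring
        have h2 := hrec n hn0 y hy
        rw [h1] at h2
        rw [h2, neg_neg]
      have hΔxy : (Coalgebra.comul (R := R) (x * y) : H ⊗[R] H) =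
          (x ⊗ₜ[R] 1 + 1 ⊗ₜ[R] x + Wx) * (y ⊗ₜ[R] 1 + 1 ⊗ₜ[R] y + Wy) := by
        rw [Bialgebra.comul_mul, hΔx, hΔy]
      have e1 : F ((x ⊗ₜ[R] (1 : H)) * (y ⊗ₜ[R] (1 : H))) = φm (x * y) := by
        rw [Algebra.TensorProduct.tmul_mul_tmul, hF, mul_one, hφ1, mul_one]
      have e2 : F ((x ⊗ₜ[R] (1 : H)) * ((1 : H) ⊗ₜ[R] y)) = φm x * φ y := by
        rw [Algebra.TensorProduct.tmul_mul_tmul, hF, mul_one, one_mul]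
      have e3 : F ((x ⊗ₜ[R] (1 : H)) * Wy) = φm x * Sy := by
        rw [hWyd, hmulsum, hSyd, ← hconstmul (φm x) ly (fun t => φm t.1 * φ t.2)]
        refine congrArg List.sum (List.map_congr_left ?_)
        intro t ht
        obtain ⟨p, q, hpq, hp, hq, h1, h2⟩ := hly t ht
        rw [one_mul, ih m p (by omega) x hx t.1 h1]
        ring
      have e4 : F (((1 : H) ⊗ₜ[R] x) * (y ⊗ₜ[R] (1 : H))) = φm y * φ x := by
        rw [Algebra.TensorProduct.tmul_mul_tmul, hF, one_mul, mul_one, mul_comm]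
      have e5 : F (((1 : H) ⊗ₜ[R] x) * ((1 : H) ⊗ₜ[R] y)) = φ x * φ y := by
        rw [Algebra.TensorProduct.tmul_mul_tmul, hF, mul_one, hφm1, one_mul, hφmul]
      have e6 : F (((1 : H) ⊗ₜ[R] x) * Wy) = φ x * Sy := by
        rw [hWyd, hmulsum, hSyd, ← hconstmul (φ x) ly (fun t => φm t.1 * φ t.2)]
        refine congrArg List.sum (List.map_congr_left ?_)
        intro t ht
        rw [one_mul, hφmul]
        ring
      have e7 : F (Wx * (y ⊗ₜ[R] (1 : H))) = φm y * Sx := by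
        rw [hWxd, hsummul, map_list_sum, List.map_map, hSxd,
          ← hconstmul (φm y) lx (fun t => φm t.1 * φ t.2)]
        refine congrArg List.sum (List.map_congr_left ?_)
        intro t ht
        obtain ⟨p, q, hpq, hp, hq, h1, h2⟩ := hlx t ht
        show F ((t.1 ⊗ₜ[R] t.2) * (y ⊗ₜ[R] (1 : H))) = φm y * (φm t.1 * φ t.2)
        rw [Algebra.TensorProduct.tmul_mul_tmul, hF, mul_one,
          ih p n (by omega) t.1 h1 y hy]
        ring
      have e8 : F (Wx * ((1 : H) ⊗ₜ[R] y)) = φ y * Sx := by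
        rw [hWxd, hsummul, map_list_sum, List.map_map, hSxd,
          ← hconstmul (φ y) lx (fun t => φm t.1 * φ t.2)]
        refine congrArg List.sum (List.map_congr_left ?_)
        intro t ht
        show F ((t.1 ⊗ₜ[R] t.2) * ((1 : H) ⊗ₜ[R] y)) = φ y * (φm t.1 * φ t.2)
        rw [Algebra.TensorProduct.tmul_mul_tmul, hF, mul_one, hφmul]
        ring
      have e9 : F (Wx * Wy) = Sx * Sy := by
        rw [hWxd, hsummul, map_list_sum, List.map_map]
        have : (lx.map (F ∘ fun t => (t.1 ⊗ₜ[R] t.2) * Wy)).sum =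
            (lx.map fun s => (φm s.1 * φ s.2) * Sy).sum := by
          refine congrArg List.sum (List.map_congr_left ?_)
          intro s hs
          obtain ⟨p, q, hpq, hp, hq, h1, h2⟩ := hlx s hs
          show F ((s.1 ⊗ₜ[R] s.2) * Wy) = (φm s.1 * φ s.2) * Sy
          rw [hWyd, hmulsum, hSyd,
            ← hconstmul (φm s.1 * φ s.2) ly (fun t => φm t.1 * φ t.2)]
          refine congrArg List.sum (List.map_congr_left ?_)
          intro t ht
          obtain ⟨p', q', hpq', hp', hq', h1', h2'⟩ := hly t ht
          rw [ih p p' (by omega) s.1 h1 t.1 h1', hφmul]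
          ring
        rw [this, hconstmulr Sy lx (fun t => φm t.1 * φ t.2), hSxd]
      have hFxy : F (Coalgebra.comul (R := R) (x * y)) =
          φm (x * y) + (φm x * φ y + φm x * Sy + φm y * φ x + φ x * φ y + φ x * Sy +
            φm y * Sx + φ y * Sx + Sx * Sy) := by
        rw [hΔxy]
        simp only [mul_add, add_mul, map_add]
        rw [e1, e2, e3, e4, e5, e6, e7, e8, e9]
        ring
      have harg : conv φm φ (x * y) - φm (x * y) =
          φm x * (φ y + Sy) + φm y * (φ x + Sx) + (φ x + Sx) * (φ y + Sy) := by
        rw [hconv, hFxy]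
        ring
      have h3 : φm x * φm y =
          - P (φm x * (φ y + Sy) + φm y * (φ x + Sx) + (φ x + Sx) * (φ y + Sy)) := by
        have h2 : φm x * φm y = P (φ x + Sx) * P (φ y + Sy) := by
          rw [hpx, hpy]; ring
        rw [h2, hRB, hpx, hpy]
        rw [show -φm x * (φ y + Sy) + (φ x + Sx) * -φm y - (φ x + Sx) * (φ y + Sy) =
          -(φm x * (φ y + Sy) + φm y * (φ x + Sx) + (φ x + Sx) * (φ y + Sy)) by ring,
          map_neg]
      rw [hrec (m + n) (by omega) (x * y) (SetLike.mul_mem_graded hx hy), harg, h3]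

theorem counterterm_map_isCharacter
    (ℬ : ℕ → Submodule R H) [GradedAlgebra ℬ]
    (hconn : Connected ℬ) (hgr : ComulGraded ℬ)
    (P : A →ₗ[R] A)
    (hidem : P.comp P = P)
    (hRB : ∀ a b : A, P a * P b = P (P a * b + a * P b - a * b))
    (himage : ∀ a b : A, a ∈ LinearMap.range P → b ∈ LinearMap.range P →
      a * b ∈ LinearMap.range P)
    (hker : ∀ a b : A, a ∈ LinearMap.ker P → b ∈ LinearMap.ker P →
      a * b ∈ LinearMap.ker P)
    (hker1 : (1 : A) ∈ LinearMap.ker P)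
    (φ φm : H →ₗ[R] A) (hφ : IsCharacter φ)
    (hφm1 : φm 1 = 1)
    -- the recursive definition φ₋(x) = −P(φ(x) + ∑ φ₋(x')φ(x'')) on positive degrees
    (hrec : ∀ n : ℕ, 0 < n → ∀ x ∈ ℬ n,
      φm x = - P ((conv φm φ) x - φm x)) :
    IsCharacter φm := by
  have key := key_hom ℬ hconn hgr P hRB φ φm hφ.1 hφ.2 hφm1 hrec
  refine ⟨hφm1, fun x y => ?_⟩
  classical
  rw [← DirectSum.sum_support_decompose ℬ x, ← DirectSum.sum_support_decompose ℬ y,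
    Finset.sum_mul_sum]
  simp only [map_sum]
  rw [Finset.sum_mul_sum]
  refine Finset.sum_congr rfl fun i _ => Finset.sum_congr rfl fun j _ => ?_
  exact key (i + j) i j le_rfl _ (SetLike.coe_mem _) _ (SetLike.coe_mem _)
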